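/- arXiv:1911.06109 — 2 statements merged into one kernel-verified Lean document; each statement's English description precedes it below -/
import Mathlib

section
/- Strong asymmetric amalgamation: let A, B, C be L-structures, with A immersed in B via i : A → B and strongly immersed in C via j : A → C. Then there exist an L-structure D, a strong immersion f' : B → D and an immersion g' : C → D with f' ∘ i = g' ∘ j, such that f'(b) ≠ g'(c) for all b ∈ B \ i(A) and c ∈ C \ j(A). -/
open FirstOrder FirstOrder.Language

universe u v w w'

namespace PositiveLogic

/-- Positive formulas with `n` free variables: built from `⊥`, atomic formulas,
`∧`, `∨` and `∃`. -/
inductive PosForm (L : FirstOrder.Language.{u, v}) : ℕ → Type (max u v)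
  | falsum {n : ℕ} : PosForm L n
  | equal {n : ℕ} (t u : L.Term (Fin n)) : PosForm L n
  | rel {n l : ℕ} (R : L.Relations l) (ts : Fin l → L.Term (Fin n)) : PosForm L n
  | and {n : ℕ} (φ ψ : PosForm L n) : PosForm L n
  | or {n : ℕ} (φ ψ : PosForm L n) : PosForm L n
  | ex {n : ℕ} (φ : PosForm L (n + 1)) : PosForm L n

variable {L : FirstOrder.Language.{u, v}}

/-- Realization of a positive formula in a structure. -/
def PosForm.Realize {M : Type w} [L.Structure M] :
    ∀ {n : ℕ}, PosForm L n → (Fin n → M) → Prop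
  | _, .falsum, _ => False
  | _, .equal t u, v => t.realize v = u.realize v
  | _, .rel R ts, v => Structure.RelMap R fun i => (ts i).realize v
  | _, .and φ ψ, v => φ.Realize v ∧ ψ.Realize v
  | _, .or φ ψ, v => φ.Realize v ∨ ψ.Realize v
  | _, .ex φ, v => ∃ x : M, φ.Realize (Fin.snoc v x)

/-- A positive sentence `φ` (element of `PosForm L 0`) holds in `M`. -/
def PosRealize (M : Type w) [L.Structure M] (φ : PosForm L 0) : Prop :=
  φ.Realize (Fin.elim0 : Fin 0 → M)

/-- `Diag⁺*(M)`: the set of positive `L`-sentences true in `M`. -/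
def posTheory (M : Type w) [L.Structure M] : Set (PosForm L 0) :=
  {φ | PosRealize M φ}

/-- `T_u*(M)`, identified with the set of positive `L`-sentences whose negation
(an h-universal sentence) is true in `M`. -/
def TuStar (M : Type w) [L.Structure M] : Set (PosForm L 0) :=
  {φ | ¬ PosRealize M φ}

/-- A basic h-inductive sentence `∀ x̄ (φ(x̄) → ψ(x̄))` with `φ, ψ` positive.
(A general h-inductive sentence, a finite conjunction of such, is equivalent to
the set of its conjuncts.) -/
structure HInd (L : FirstOrder.Language.{u, v}) : Type (max u v) where
  n : ℕ
  hyp : PosForm L n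
  concl : PosForm L n

/-- Realization of a basic h-inductive sentence. -/
def HInd.Realize (s : HInd L) (M : Type w) [L.Structure M] : Prop :=
  ∀ v : Fin s.n → M, s.hyp.Realize v → s.concl.Realize v

/-- `M` is a model of the h-inductive theory `T`. -/
def HModels (M : Type w) [L.Structure M] (T : Set (HInd L)) : Prop :=
  ∀ s ∈ T, s.Realize M

/-- `T_i*(M)`: the set of (basic) h-inductive `L`-sentences true in `M`. -/
def TiStar (M : Type w) [L.Structure M] : Set (HInd L) :=
  {s | s.Realize M}

/-- `T_u(T)`: the h-universal consequences of `T`, identified with the set of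
positive sentences `φ` such that `¬φ` holds in every model of `T`. -/
def TuOf (T : Set (HInd L)) : Set (PosForm L 0) :=
  {φ | ∀ (M : Type (max u v)) [L.Structure M], HModels M T → ¬ PosRealize M φ}

/-- A homomorphism is an immersion if it preserves and reflects all positive
formulas. -/
def IsImmersion {A : Type w} {B : Type w'} [L.Structure A] [L.Structure B]
    (f : A →[L] B) : Prop :=
  ∀ {n : ℕ} (φ : PosForm L n) (v : Fin n → A), φ.Realize v ↔ φ.Realize (f ∘ v)

/-- A homomorphism `f : A → B` is a strong immersion if `B`, with parameters
from `A` interpreted via `f`, models `T_i(A)`, the full h-inductive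
`L(A)`-theory of `A`. -/
def IsStrongImmersion {A : Type w} {B : Type w'} [L.Structure A] [L.Structure B]
    (f : A →[L] B) : Prop :=
  ∀ {n m : ℕ} (φ ψ : PosForm L (n + m)) (a : Fin m → A),
    (∀ v : Fin n → A, φ.Realize (Fin.append v a) → ψ.Realize (Fin.append v a)) →
    ∀ v : Fin n → B, φ.Realize (Fin.append v (f ∘ a)) → ψ.Realize (Fin.append v (f ∘ a))

/-- `M` is a positively closed (pc) model of `T`: it models `T` and every
homomorphism from `M` into a model of `T` is an immersion. -/
def IsPC (T : Set (HInd L)) (M : Type (max u v)) [L.Structure M] : Prop :=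
  HModels M T ∧
    ∀ (N : Type (max u v)) [L.Structure N], HModels N T → ∀ f : M →[L] N, IsImmersion f

/-- `T` has the joint continuation property (is positively complete). -/
def JCP (T : Set (HInd L)) : Prop :=
  ∀ (A : Type (max u v)) [L.Structure A] (B : Type (max u v)) [L.Structure B],
    HModels A T → HModels B T →
      ∃ (C : Type (max u v)) (_ : L.Structure C),
        HModels C T ∧ Nonempty (A →[L] C) ∧ Nonempty (B →[L] C)

/-- `T₁` and `T₂` are `T`-complete. -/
def TComplete (T₁ T₂ T : Set (HInd L)) : Prop :=
  ∀ (A : Type (max u v)) [L.Structure A] (B : Type (max u v)) [L.Structure B],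
    HModels A T₁ → HModels B T₂ →
      ∃ (C : Type (max u v)) (_ : L.Structure C),
        HModels C T ∧ Nonempty (A →[L] C) ∧ Nonempty (B →[L] C)

/-- trivially true in nonempty structures -/
def posTop (n : ℕ) : PosForm L n :=
  .ex (.equal (Term.var (Fin.last n)) (Term.var (Fin.last n)))

lemma posTop_realize {M : Type w} [L.Structure M] [Nonempty M] {n : ℕ} (v : Fin n → M) :
    (posTop n : PosForm L n).Realize v := by
  obtain ⟨x⟩ := ‹Nonempty M›
  exact ⟨x, rfl⟩

/-- relabelling of variables -/
def PosForm.relabelV : ∀ {n : ℕ}, PosForm L n → ∀ {n' : ℕ}, (Fin n → Fin n') → PosForm L n'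
  | _, .falsum, _, _ => .falsum
  | _, .equal t u, _, g => .equal (t.relabel g) (u.relabel g)
  | _, .rel R ts, _, g => .rel R (fun i => (ts i).relabel g)
  | _, .and φ ψ, _, g => .and (φ.relabelV g) (ψ.relabelV g)
  | _, .or φ ψ, _, g => .or (φ.relabelV g) (ψ.relabelV g)
  | _, .ex φ, n', g => .ex (φ.relabelV (Fin.snoc (Fin.castSucc ∘ g) (Fin.last n')))

lemma PosForm.realize_relabelV {M : Type w} [L.Structure M] :
    ∀ {n : ℕ} (φ : PosForm L n) {n' : ℕ} (g : Fin n → Fin n') (v : Fin n' → M),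
      (φ.relabelV g).Realize v ↔ φ.Realize (v ∘ g)
  | _, .falsum, _, _, _ => Iff.rfl
  | _, .equal t u, _, g, v => by simp [relabelV, Realize, Term.realize_relabel]
  | _, .rel R ts, _, g, v => by simp [relabelV, Realize, Term.realize_relabel]
  | _, .and φ ψ, _, g, v => by
      simp [relabelV, Realize, realize_relabelV φ g v, realize_relabelV ψ g v]
  | _, .or φ ψ, _, g, v => by
      simp [relabelV, Realize, realize_relabelV φ g v, realize_relabelV ψ g v]
  | n, .ex φ, n', g, v => by
      simp only [relabelV, Realize]
      refine exists_congr fun x => ?_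
      rw [realize_relabelV φ _ _]
      have : Fin.snoc v x ∘ Fin.snoc (Fin.castSucc ∘ g) (Fin.last n') =
          Fin.snoc (v ∘ g) x := by
        funext k
        refine Fin.lastCases ?_ (fun k => ?_) k
        · simp
        · simp
      rw [this]

/-- translation into ordinary first-order formulas -/
def PosForm.toFormula : ∀ {n : ℕ}, PosForm L n → L.Formula (Fin n)
  | _, .falsum => ⊥
  | _, .equal t u => Term.equal t u
  | _, .rel R ts => R.formula ts
  | _, .and φ ψ => φ.toFormula ⊓ ψ.toFormula
  | _, .or φ ψ => φ.toFormula ⊔ ψ.toFormula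
  | n, .ex φ =>
      (BoundedFormula.relabel
        (fun k : Fin (n+1) =>
          if h : (k : ℕ) < n then Sum.inl (⟨k, h⟩ : Fin n) else Sum.inr (0 : Fin 1))
        φ.toFormula).ex

lemma PosForm.realize_toFormula {M : Type w} [L.Structure M] :
    ∀ {n : ℕ} (φ : PosForm L n) (v : Fin n → M), φ.toFormula.Realize v ↔ φ.Realize v
  | _, .falsum, v => by simp [toFormula, Realize]
  | _, .equal t u, v => by simp [toFormula, Realize]
  | _, .rel R ts, v => by simp [toFormula, Realize]
  | _, .and φ ψ, v => by
      simp [toFormula, Realize, realize_toFormula φ v, realize_toFormula ψ v]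
  | _, .or φ ψ, v => by
      simp [toFormula, Realize, realize_toFormula φ v, realize_toFormula ψ v]
  | n, .ex φ, v => by
      rw [toFormula]
      unfold Formula.Realize
      rw [BoundedFormula.realize_ex]
      simp only [Realize]
      refine exists_congr fun x => ?_
      rw [BoundedFormula.realize_relabel]
      unfold Formula.Realize at *
      rw [← realize_toFormula φ]
      have hval : (Sum.elim v ((Fin.snoc (default : Fin 0 → M) x : Fin 1 → M) ∘ Fin.castAdd 0) ∘
          fun k : Fin (n+1) =>
            if h : (k : ℕ) < n then Sum.inl (⟨k, h⟩ : Fin n) else Sum.inr (0 : Fin 1)) =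
          Fin.snoc v x := by
        funext k
        refine Fin.lastCases ?_ (fun k => ?_) k
        · simp [Fin.snoc]
        · have hk : ((Fin.castSucc k : Fin (n+1)) : ℕ) < n := k.isLt
          simp [hk, Fin.snoc, Fin.castAdd]
      rw [iff_iff_eq, hval]
      congr 1
      funext k; exact k.elim0

section Sentences

variable {α : Type w}

/-- positive sentence with parameters -/
noncomputable def psent {n : ℕ} (φ : PosForm L n) (p : Fin n → α) : L[[α]].Sentence :=
  Formula.equivSentence (φ.toFormula.relabel p)

/-- variable/parameter split used in `hsent` -/
def hvar (n m : ℕ) (p : Fin m → α) : Fin (n + m) → α ⊕ Fin n :=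
  Fin.addCases (fun k => Sum.inr k) (fun k => Sum.inl (p k))

/-- basic h-inductive sentence with parameters -/
noncomputable def hsent (n m : ℕ) (φ ψ : PosForm L (n + m)) (p : Fin m → α) :
    L[[α]].Sentence :=
  Formula.equivSentence
    ((BoundedFormula.relabel (hvar n m p) (φ.toFormula.imp ψ.toFormula)).alls)

variable {M : Type w'} [L.Structure M] [L[[α]].Structure M]
  [(L.lhomWithConstants α).IsExpansionOn M]

lemma realize_psent {n : ℕ} (φ : PosForm L n) (p : Fin n → α) :
    (M ⊨ psent φ p) ↔ φ.Realize (fun k => ((L.con (p k) : M))) := by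
  rw [psent, Formula.realize_equivSentence, Formula.realize_relabel,
    PosForm.realize_toFormula]
  rfl

lemma realize_hsent {n m : ℕ} (φ ψ : PosForm L (n + m)) (p : Fin m → α) :
    (M ⊨ hsent n m φ ψ p) ↔
      ∀ xs : Fin n → M,
        φ.Realize (Fin.append xs (fun t => ((L.con (p t) : M)))) →
        ψ.Realize (Fin.append xs (fun t => ((L.con (p t) : M)))) := by
  rw [hsent, Formula.realize_equivSentence, BoundedFormula.realize_alls]
  refine forall_congr' fun xs => ?_
  rw [BoundedFormula.realize_relabel, BoundedFormula.realize_imp]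
  have hval : (Sum.elim (fun a => ((L.con a : M))) (xs ∘ Fin.castAdd 0) ∘ hvar n m p) =
      Fin.append (xs ∘ Fin.castAdd 0) (fun t => ((L.con (p t) : M))) := by
    funext k
    refine Fin.addCases (fun k1 => ?_) (fun k2 => ?_) k
    · rw [Fin.append_left]
      simp [hvar]
    · rw [Fin.append_right]
      simp [hvar]
  have hxs : (xs ∘ Fin.castAdd 0) = xs := by
    funext k; rfl
  have hxs2 : (xs ∘ Fin.natAdd n) = (default : Fin 0 → M) := funext fun k => k.elim0
  rw [hval, hxs, hxs2]
  exact imp_congr (PosForm.realize_toFormula φ _) (PosForm.realize_toFormula ψ _)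

end Sentences


lemma PosForm.realize_foldr_and {M : Type w} [L.Structure M] {n : ℕ}
    (l : List (PosForm L n)) (b : PosForm L n) (v : Fin n → M) :
    (l.foldr .and b).Realize v ↔ (∀ φ ∈ l, φ.Realize v) ∧ b.Realize v := by
  induction l with
  | nil => simp
  | cons hd tl ih => simp [Realize, ih]; tauto

lemma PosForm.realize_foldr_or {M : Type w} [L.Structure M] {n : ℕ}
    (l : List (PosForm L n)) (b : PosForm L n) (v : Fin n → M) :
    (l.foldr .or b).Realize v ↔ (∃ φ ∈ l, φ.Realize v) ∨ b.Realize v := by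
  induction l with
  | nil => simp
  | cons hd tl ih =>
      simp only [List.foldr_cons, Realize, ih, List.mem_cons]
      constructor
      · rintro (h | ⟨φ, hφ, h⟩ | h)
        exacts [Or.inl ⟨hd, Or.inl rfl, h⟩, Or.inl ⟨φ, Or.inr hφ, h⟩, Or.inr h]
      · rintro (⟨φ, rfl | hφ, h⟩ | h)
        exacts [Or.inl h, Or.inr (Or.inl ⟨φ, hφ, h⟩), Or.inr (Or.inr h)]

lemma append_zero_left {X : Type*} {m : ℕ} (v : Fin 0 → X) (p : Fin m → X) :
    Fin.append v p = p ∘ (Fin.cast (Nat.zero_add m)) := by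
  have hv : v = Fin.elim0 := funext fun k => k.elim0
  rw [hv, Fin.elim0_append]

lemma IsStrongImmersion.injective {A : Type w} {C : Type w'} [L.Structure A] [L.Structure C]
    {j : A →[L] C} (hj : IsStrongImmersion j) : Function.Injective j := by
  intro a a' h
  by_contra hne
  set p : Fin 2 → A := fun t => if (t : ℕ) = 0 then a else a' with hpdef
  have hstep := hj (n := 0) (m := 2)
      (.equal (.var ⟨0, by omega⟩) (.var ⟨1, by omega⟩)) .falsum p ?_
  · exact hstep (fun x => x.elim0) (by
      simp only [PosForm.Realize, Term.realize, append_zero_left]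
      simp [hpdef, h])
  · intro v hv
    simp only [PosForm.Realize, Term.realize, append_zero_left] at hv
    simp [hpdef] at hv
    exact hne hv

lemma exists_kappa {A B C : Type (max u v)} [L.Structure A] [L.Structure B] [L.Structure C]
    (i : A →[L] B) (j : A →[L] C) (hi : IsImmersion i) (hj : IsStrongImmersion j)
    (a₀ : A)
    (pos neg : List ((n : ℕ) × (PosForm L n × (Fin n → C))))
    (hpos : ∀ d ∈ pos, d.2.1.Realize d.2.2)
    (hneg : ∀ d ∈ neg, ¬ d.2.1.Realize d.2.2) :
    ∃ κ : C → B, (∀ a, κ (j a) = i a) ∧ (∀ c, κ c ∈ Set.range i) ∧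
      (∀ d ∈ pos, d.2.1.Realize (κ ∘ d.2.2)) ∧
      (∀ d ∈ neg, ¬ d.2.1.Realize (κ ∘ d.2.2)) := by
  classical
  have hjinj : Function.Injective j := hj.injective
  set elts : List C := (pos ++ neg).flatMap (fun d => List.ofFn d.2.2) with helts
  set N := elts.length with hN
  have hmem : ∀ d ∈ pos ++ neg, ∀ k, d.2.2 k ∈ elts := by
    intro d hd k
    exact List.mem_flatMap.2 ⟨d, hd, List.mem_ofFn.2 ⟨k, rfl⟩⟩
  let idx : ∀ c, c ∈ elts → Fin N := fun c hc => ⟨elts.idxOf c, List.idxOf_lt_length_iff.2 hc⟩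
  have hidx : ∀ c hc, elts.get (idx c hc) = c := fun c hc => List.idxOf_get _
  let gD : ∀ d, d ∈ pos ++ neg → Fin d.1 → Fin N :=
    fun d hd k => idx (d.2.2 k) (hmem d hd k)
  have hgD : ∀ d hd k, elts.get (gD d hd k) = d.2.2 k := fun d hd k => hidx (d.2.2 k) (hmem d hd k)
  let p : Fin N → A := fun t => if h : ∃ a, j a = elts.get t then h.choose else a₀
  have hp : ∀ t (h : ∃ a, j a = elts.get t), j (p t) = elts.get t := by
    intro t h
    simp only [p, dif_pos h]
    exact h.choose_spec
  have hp2 : ∀ t (h : ∃ a, j a = elts.get t), p t = h.choose := by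
    intro t h; simp only [p, dif_pos h]
  let hypL : List (PosForm L (N + N)) :=
    pos.attach.map (fun d =>
      d.1.2.1.relabelV (fun k => Fin.castAdd N (gD d.1 (List.mem_append_left _ d.2) k))) ++
    (List.finRange N).map (fun t =>
      if ∃ a, j a = elts.get t then
        PosForm.equal (Term.var (Fin.castAdd N t)) (Term.var (Fin.natAdd N t))
      else posTop (N + N))
  let hyp : PosForm L (N + N) := hypL.foldr .and (posTop (N + N))
  let concl : PosForm L (N + N) :=
    (neg.attach.map (fun d =>
      d.1.2.1.relabelV (fun k =>
        Fin.castAdd N (gD d.1 (List.mem_append_right _ d.2) k)))).foldr .or .falsum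
  haveI : Nonempty C := ⟨j a₀⟩
  haveI : Nonempty A := ⟨a₀⟩
  have hcomp : ∀ (X : Type (max u v)) (v : Fin N → X) (q : Fin N → X) (d : _) (hd : d ∈ pos ++ neg)
      (w : Fin d.1 → X), (∀ k, v (gD d hd k) = w k) →
      (Fin.append v q ∘ fun k => Fin.castAdd N (gD d hd k)) = w := by
    intro X v q d hd w hw
    funext k
    rw [Function.comp_apply, Fin.append_left]
    exact hw k
  have hC : ¬ ∀ v : Fin N → C, hyp.Realize (Fin.append v (⇑j ∘ p)) →
      concl.Realize (Fin.append v (⇑j ∘ p)) := by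
    intro hall
    have h1 : hyp.Realize (Fin.append elts.get (⇑j ∘ p)) := by
      rw [PosForm.realize_foldr_and]
      refine ⟨?_, posTop_realize _⟩
      intro φ hφ
      rw [List.mem_append] at hφ
      rcases hφ with hφ | hφ
      · rw [List.mem_map] at hφ
        obtain ⟨d, hd, rfl⟩ := hφ
        rw [PosForm.realize_relabelV,
          hcomp _ _ _ _ (List.mem_append_left _ d.2) _
            (fun k => hgD d.1 (List.mem_append_left _ d.2) k)]
        exact hpos d.1 d.2
      · rw [List.mem_map] at hφ
        obtain ⟨t, _, rfl⟩ := hφ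
        split_ifs with h
        · simp only [PosForm.Realize, Term.realize]
          rw [Fin.append_left, Fin.append_right, Function.comp_apply, hp t h]
        · exact posTop_realize _
    have h2 := hall elts.get h1
    rw [PosForm.realize_foldr_or] at h2
    rcases h2 with ⟨φ, hφ, hre⟩ | h2
    · rw [List.mem_map] at hφ
      obtain ⟨d, hd, rfl⟩ := hφ
      rw [PosForm.realize_relabelV,
        hcomp _ _ _ _ (List.mem_append_right _ d.2) _
          (fun k => hgD d.1 (List.mem_append_right _ d.2) k)] at hre
      exact hneg d.1 d.2 hre
    · exact h2
  have hA : ¬ ∀ v : Fin N → A, hyp.Realize (Fin.append v p) → concl.Realize (Fin.append v p) :=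
    fun hall => hC (hj (n := N) (m := N) hyp concl p hall)
  push_neg at hA
  obtain ⟨e, he1, he2⟩ := hA
  rw [PosForm.realize_foldr_and] at he1
  have he_pos : ∀ d (hd : d ∈ pos), d.2.1.Realize (e ∘ gD d (List.mem_append_left _ hd)) := by
    intro d hd
    have hm : d.2.1.relabelV (fun k => Fin.castAdd N (gD d (List.mem_append_left _ hd) k)) ∈ hypL := by
      refine List.mem_append_left _ (List.mem_map.2 ⟨⟨d, hd⟩, List.mem_attach _ _, rfl⟩)
    have := he1.1 _ hm
    rw [PosForm.realize_relabelV,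
      hcomp _ _ _ _ (List.mem_append_left _ hd) _ (fun k => rfl)] at this
    exact this
  have he_eq : ∀ t (h : ∃ a, j a = elts.get t), e t = p t := by
    intro t h
    have hm : (if ∃ a, j a = elts.get t then
        PosForm.equal (Term.var (Fin.castAdd N t)) (Term.var (Fin.natAdd N t))
      else posTop (N + N)) ∈ hypL :=
      List.mem_append_right _ (List.mem_map.2 ⟨t, List.mem_finRange t, rfl⟩)
    have h3 := he1.1 _ hm
    rw [if_pos h] at h3
    simp only [PosForm.Realize, Term.realize] at h3
    rwa [Fin.append_left, Fin.append_right] at h3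
  have he_neg : ∀ d (hd : d ∈ neg), ¬ d.2.1.Realize (e ∘ gD d (List.mem_append_right _ hd)) := by
    intro d hd hre
    rw [PosForm.realize_foldr_or] at he2
    refine he2 (Or.inl ⟨_, List.mem_map.2 ⟨⟨d, hd⟩, List.mem_attach _ _, rfl⟩, ?_⟩)
    rw [PosForm.realize_relabelV,
      hcomp _ _ _ _ (List.mem_append_right _ hd) _ (fun k => rfl)]
    exact hre
  refine ⟨fun c =>
    if h : ∃ a, j a = c then i h.choose
    else if hc : c ∈ elts then i (e (idx c hc)) else i a₀, ?_, ?_, ?_, ?_⟩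
  · intro a
    have h : ∃ a', j a' = j a := ⟨a, rfl⟩
    simp only [dif_pos h]
    exact congrArg i (hjinj h.choose_spec)
  · intro c
    dsimp only
    split_ifs <;> exact Set.mem_range_self _
  · intro d hd
    have hkey : (fun c => if h : ∃ a, j a = c then i h.choose
        else if hc : c ∈ elts then i (e (idx c hc)) else i a₀) ∘ d.2.2 =
        ⇑i ∘ (e ∘ gD d (List.mem_append_left _ hd)) := by
      funext k
      rw [Function.comp_apply, Function.comp_apply, Function.comp_apply]
      by_cases h : ∃ a, j a = d.2.2 k
      · rw [dif_pos h]
        have h' : ∃ a, j a = elts.get (gD d (List.mem_append_left _ hd) k) := by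
          rw [hgD d (List.mem_append_left _ hd) k]; exact h
        rw [he_eq _ h', hp2 _ h']
        refine congrArg i (hjinj ?_)
        rw [h.choose_spec, h'.choose_spec, hgD d (List.mem_append_left _ hd) k]
      · rw [dif_neg h, dif_pos (hmem d (List.mem_append_left _ hd) k)]
    rw [hkey]
    exact (hi d.2.1 _).1 (he_pos d hd)
  · intro d hd
    have hkey : (fun c => if h : ∃ a, j a = c then i h.choose
        else if hc : c ∈ elts then i (e (idx c hc)) else i a₀) ∘ d.2.2 =
        ⇑i ∘ (e ∘ gD d (List.mem_append_right _ hd)) := by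
      funext k
      rw [Function.comp_apply, Function.comp_apply, Function.comp_apply]
      by_cases h : ∃ a, j a = d.2.2 k
      · rw [dif_pos h]
        have h' : ∃ a, j a = elts.get (gD d (List.mem_append_right _ hd) k) := by
          rw [hgD d (List.mem_append_right _ hd) k]; exact h
        rw [he_eq _ h', hp2 _ h']
        refine congrArg i (hjinj ?_)
        rw [h.choose_spec, h'.choose_spec, hgD d (List.mem_append_right _ hd) k]
      · rw [dif_neg h, dif_pos (hmem d (List.mem_append_right _ hd) k)]
    rw [hkey]
    intro hre
    exact he_neg d hd ((hi d.2.1 _).2 hre)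

/-- the equality formula in two variables -/
def eqF : PosForm L 2 := .equal (.var 0) (.var 1)

lemma realize_eqF {M : Type w} [L.Structure M] (v : Fin 2 → M) :
    (eqF : PosForm L 2).Realize v ↔ v 0 = v 1 := by
  simp [eqF, PosForm.Realize, Term.realize]

lemma main_case (A B C : Type (max u v)) [L.Structure A] [L.Structure B] [L.Structure C]
    (i : A →[L] B) (j : A →[L] C) (hi : IsImmersion i) (hj : IsStrongImmersion j) (a₀ : A) :
    ∃ (D : Type (max u v)) (_ : L.Structure D) (f' : B →[L] D) (g' : C →[L] D),
      IsStrongImmersion f' ∧ IsImmersion g' ∧ f'.comp i = g'.comp j ∧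
        ∀ b c, b ∉ Set.range i → c ∉ Set.range j → f' b ≠ g' c := by
  classical
  haveI : Nonempty B := ⟨i a₀⟩
  let T : (L.withConstants (B ⊕ C)).Theory :=
    {s | ∃ (n m : ℕ) (φ ψ : PosForm L (n + m)) (b : Fin m → B),
        (∀ v : Fin n → B, φ.Realize (Fin.append v b) → ψ.Realize (Fin.append v b)) ∧
        s = hsent n m φ ψ (Sum.inl ∘ b)} ∪
    {s | ∃ (n : ℕ) (φ : PosForm L n) (b : Fin n → B), φ.Realize b ∧ s = psent φ (Sum.inl ∘ b)} ∪
    {s | ∃ (n : ℕ) (φ : PosForm L n) (c : Fin n → C), φ.Realize c ∧ s = psent φ (Sum.inr ∘ c)} ∪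
    {s | ∃ (n : ℕ) (φ : PosForm L n) (c : Fin n → C), ¬ φ.Realize c ∧
        s = (psent φ (Sum.inr ∘ c)).not} ∪
    {s | ∃ a : A, s = psent eqF ![Sum.inl (i a), Sum.inr (j a)]} ∪
    {s | ∃ (b : B) (c : C), b ∉ Set.range i ∧ c ∉ Set.range j ∧
        s = (psent eqF ![Sum.inl b, Sum.inr c]).not}
  have hfin : T.IsFinitelySatisfiable := by
    intro T0 hT0
    -- decode the positive and negative facts about C occurring in T0
    let dpos : (L.withConstants (B ⊕ C)).Sentence → Option ((n : ℕ) × (PosForm L n × (Fin n → C))) :=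
      fun s => if h : ∃ d : (n : ℕ) × (PosForm L n × (Fin n → C)),
          d.2.1.Realize d.2.2 ∧ s = psent d.2.1 (((Sum.inr : C → B ⊕ C)) ∘ d.2.2) then some h.choose else none
    let dneg : (L.withConstants (B ⊕ C)).Sentence → Option ((n : ℕ) × (PosForm L n × (Fin n → C))) :=
      fun s => if h : ∃ d : (n : ℕ) × (PosForm L n × (Fin n → C)),
          ¬ d.2.1.Realize d.2.2 ∧ s = (psent d.2.1 (((Sum.inr : C → B ⊕ C)) ∘ d.2.2)).not then some h.choose
        else none
    let pos := T0.toList.filterMap dpos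
    let neg := T0.toList.filterMap dneg
    have hpos : ∀ d ∈ pos, d.2.1.Realize d.2.2 := by
      intro d hd
      obtain ⟨s, _, hsd⟩ := List.mem_filterMap.1 hd
      simp only [dpos] at hsd
      split_ifs at hsd with h
      cases hsd
      exact h.choose_spec.1
    have hneg : ∀ d ∈ neg, ¬ d.2.1.Realize d.2.2 := by
      intro d hd
      obtain ⟨s, _, hsd⟩ := List.mem_filterMap.1 hd
      simp only [dneg] at hsd
      split_ifs at hsd with h
      cases hsd
      exact h.choose_spec.1
    obtain ⟨κ, hκ1, hκ2, hκ3, hκ4⟩ := exists_kappa i j hi hj a₀ pos neg hpos hneg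
    letI : (constantsOn (B ⊕ C)).Structure B := constantsOn.structure (Sum.elim id κ)
    have hcon : ∀ x : B ⊕ C, ((L.con x : (L.withConstants (B ⊕ C)).Constants) : B) =
        Sum.elim id κ x := fun x => rfl
    haveI : B ⊨ (T0 : (L.withConstants (B ⊕ C)).Theory) := by
      rw [Theory.model_iff]
      intro s hs
      rcases hT0 hs with (((((h | h) | h) | h) | h) | h)
      · obtain ⟨n, m, φ, ψ, b, hb, rfl⟩ := h
        rw [realize_hsent]
        have hparam : (fun t => ((L.con ((Sum.inl ∘ b) t) :
            (L.withConstants (B ⊕ C)).Constants) : B)) = b := funext fun t => rfl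
        rw [hparam]
        exact hb
      · obtain ⟨n, φ, b, hb, rfl⟩ := h
        rw [realize_psent]
        exact hb
      · obtain ⟨n, φ, c, hc, rfl⟩ := h
        have hd : ∃ d : (n : ℕ) × (PosForm L n × (Fin n → C)),
            d.2.1.Realize d.2.2 ∧ psent φ (Sum.inr ∘ c) =
              psent d.2.1 (((Sum.inr : C → B ⊕ C)) ∘ d.2.2) :=
          ⟨⟨n, φ, c⟩, hc, rfl⟩
        have hmem : hd.choose ∈ pos := by
          refine List.mem_filterMap.2 ⟨psent φ (Sum.inr ∘ c), Finset.mem_toList.2 hs, ?_⟩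
          simp only [dpos, dif_pos hd]
        rw [hd.choose_spec.2, realize_psent]
        exact hκ3 _ hmem
      · obtain ⟨n, φ, c, hc, rfl⟩ := h
        have hd : ∃ d : (n : ℕ) × (PosForm L n × (Fin n → C)),
            ¬ d.2.1.Realize d.2.2 ∧ (psent φ (Sum.inr ∘ c)).not =
              (psent d.2.1 (((Sum.inr : C → B ⊕ C)) ∘ d.2.2)).not :=
          ⟨⟨n, φ, c⟩, hc, rfl⟩
        have hmem : hd.choose ∈ neg := by
          refine List.mem_filterMap.2 ⟨(psent φ (Sum.inr ∘ c)).not, Finset.mem_toList.2 hs, ?_⟩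
          simp only [dneg, dif_pos hd]
        rw [hd.choose_spec.2, Sentence.realize_not, realize_psent]
        exact hκ4 _ hmem
      · obtain ⟨a, rfl⟩ := h
        rw [realize_psent, realize_eqF]
        show Sum.elim id κ (Sum.inl (i a)) = Sum.elim id κ (Sum.inr (j a))
        simp [hκ1 a]
      · obtain ⟨b, c, hb, hc, rfl⟩ := h
        rw [Sentence.realize_not, realize_psent, realize_eqF]
        show ¬ (Sum.elim id κ (Sum.inl b) = Sum.elim id κ (Sum.inr c))
        simp only [Sum.elim_inl, Sum.elim_inr, id_eq]
        intro hbc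
        exact hb (hbc ▸ hκ2 c)
    exact Theory.Model.isSatisfiable B
  have hsat : T.IsSatisfiable := Theory.isSatisfiable_iff_isFinitelySatisfiable.2 hfin
  let Mod := hsat.some
  haveI := Mod.is_model
  refine ⟨Mod, (L.lhomWithConstants (B ⊕ C)).reduct Mod, ?_⟩
  letI : (L.Structure Mod) := (L.lhomWithConstants (B ⊕ C)).reduct Mod
  haveI : (L.lhomWithConstants (B ⊕ C)).IsExpansionOn (Mod : Type (max u v)) :=
    LHom.isExpansionOn_reduct (L.lhomWithConstants (B ⊕ C)) Mod
  let κD : B ⊕ C → Mod := fun x => ((L.con x : (L.withConstants (B ⊕ C)).Constants) : Mod)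
  have hmod : ∀ s ∈ T, Mod ⊨ s := fun s hs => Theory.realize_sentence_of_mem T hs
  let f' : B →[L] Mod :=
    { toFun := fun b => κD (Sum.inl b)
      map_fun' := by
        intro l f x
        have hb : (PosForm.equal (Term.func f (fun k => Term.var (Fin.castSucc k)))
            (Term.var (Fin.last l)) : PosForm L (l + 1)).Realize
            (Fin.snoc x (Structure.funMap f x)) := by
          simp only [PosForm.Realize, Term.realize, Fin.snoc_castSucc, Fin.snoc_last]
        have hmem : psent (PosForm.equal (Term.func f (fun k => Term.var (Fin.castSucc k)))
            (Term.var (Fin.last l))) (Sum.inl ∘ Fin.snoc x (Structure.funMap f x)) ∈ T :=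
          Or.inl (Or.inl (Or.inl (Or.inl (Or.inr ⟨l + 1, _, _, hb, rfl⟩))))
        have := hmod _ hmem
        rw [realize_psent] at this
        simp only [PosForm.Realize, Term.realize] at this
        have h1 := this.symm
        simp only [Function.comp_apply, Fin.snoc_castSucc, Fin.snoc_last] at h1 ⊢
        convert h1 using 2
        rfl
      map_rel' := by
        intro l r x hx
        have hb : (PosForm.rel r (fun k => Term.var k) : PosForm L l).Realize x := hx
        have hmem : psent (PosForm.rel r (fun k => Term.var k)) (Sum.inl ∘ x) ∈ T :=
          Or.inl (Or.inl (Or.inl (Or.inl (Or.inr ⟨l, _, _, hb, rfl⟩))))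
        have := hmod _ hmem
        rw [realize_psent] at this
        exact this }
  let g' : C →[L] Mod :=
    { toFun := fun c => κD (Sum.inr c)
      map_fun' := by
        intro l f x
        have hb : (PosForm.equal (Term.func f (fun k => Term.var (Fin.castSucc k)))
            (Term.var (Fin.last l)) : PosForm L (l + 1)).Realize
            (Fin.snoc x (Structure.funMap f x)) := by
          simp only [PosForm.Realize, Term.realize, Fin.snoc_castSucc, Fin.snoc_last]
        have hmem : psent (PosForm.equal (Term.func f (fun k => Term.var (Fin.castSucc k)))
            (Term.var (Fin.last l))) (Sum.inr ∘ Fin.snoc x (Structure.funMap f x)) ∈ T :=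
          Or.inl (Or.inl (Or.inl (Or.inr ⟨l + 1, _, _, hb, rfl⟩)))
        have := hmod _ hmem
        rw [realize_psent] at this
        simp only [PosForm.Realize, Term.realize] at this
        have h1 := this.symm
        simp only [Function.comp_apply, Fin.snoc_castSucc, Fin.snoc_last] at h1 ⊢
        convert h1 using 2
        rfl
      map_rel' := by
        intro l r x hx
        have hb : (PosForm.rel r (fun k => Term.var k) : PosForm L l).Realize x := hx
        have hmem : psent (PosForm.rel r (fun k => Term.var k)) (Sum.inr ∘ x) ∈ T :=
          Or.inl (Or.inl (Or.inl (Or.inr ⟨l, _, _, hb, rfl⟩)))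
        have := hmod _ hmem
        rw [realize_psent] at this
        exact this }
  refine ⟨f', g', ?_, ?_, ?_, ?_⟩
  · intro n m φ ψ a h
    have hmem : hsent n m φ ψ (Sum.inl ∘ a) ∈ T :=
      Or.inl (Or.inl (Or.inl (Or.inl (Or.inl ⟨n, m, φ, ψ, a, h, rfl⟩))))
    have := hmod _ hmem
    rw [realize_hsent] at this
    exact this
  · intro n φ v
    by_cases hreal : φ.Realize v
    · have hmem : psent φ (Sum.inr ∘ v) ∈ T :=
        Or.inl (Or.inl (Or.inl (Or.inr ⟨n, φ, v, hreal, rfl⟩)))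
      have := hmod _ hmem
      rw [realize_psent] at this
      exact iff_of_true hreal this
    · have hmem : (psent φ (Sum.inr ∘ v)).not ∈ T :=
        Or.inl (Or.inl (Or.inr ⟨n, φ, v, hreal, rfl⟩))
      have := hmod _ hmem
      rw [Sentence.realize_not, realize_psent] at this
      exact iff_of_false hreal this
  · refine Hom.ext fun a => ?_
    have hmem : psent eqF ![Sum.inl (i a), Sum.inr (j a)] ∈ T :=
      Or.inl (Or.inr ⟨a, rfl⟩)
    have := hmod _ hmem
    rw [realize_psent, realize_eqF] at this
    exact this
  · intro b c hb hc hEq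
    have hmem : (psent eqF ![Sum.inl b, Sum.inr c]).not ∈ T :=
      Or.inr ⟨b, c, hb, hc, rfl⟩
    have := hmod _ hmem
    rw [Sentence.realize_not, realize_psent, realize_eqF] at this
    refine this ?_
    exact hEq

lemma realize_iff_of_isEmpty {M N : Type w} [L.Structure M] [L.Structure N]
    [IsEmpty M] [IsEmpty N]
    (hrel : ∀ (R : L.Relations 0) (x : Fin 0 → M) (y : Fin 0 → N),
      Structure.RelMap R x ↔ Structure.RelMap R y) :
    ∀ {n : ℕ} (φ : PosForm L n) (v : Fin n → M) (w : Fin n → N),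
      φ.Realize v ↔ φ.Realize w := by
  intro n φ
  induction φ with
  | falsum => exact fun v w => Iff.rfl
  | equal t u => exact fun v w => (IsEmpty.false (t.realize v)).elim
  | @rel n l R ts =>
      intro v w
      cases l with
      | zero => exact hrel R _ _
      | succ l => exact (IsEmpty.false ((ts 0).realize v)).elim
  | and φ ψ ihφ ihψ => exact fun v w => and_congr (ihφ v w) (ihψ v w)
  | or φ ψ ihφ ihψ => exact fun v w => or_congr (ihφ v w) (ihψ v w)
  | ex φ ih =>
      exact fun v w => iff_of_false (fun h => IsEmpty.false h.choose)
        (fun h => IsEmpty.false h.choose)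

lemma empty_case (A B C : Type (max u v)) [L.Structure A] [L.Structure B] [L.Structure C]
    (i : A →[L] B) (j : A →[L] C) (hi : IsImmersion i) (hj : IsStrongImmersion j)
    (hA : IsEmpty A) :
    ∃ (D : Type (max u v)) (_ : L.Structure D) (f' : B →[L] D) (g' : C →[L] D),
      IsStrongImmersion f' ∧ IsImmersion g' ∧ f'.comp i = g'.comp j ∧
        ∀ b c, b ∉ Set.range i → c ∉ Set.range j → f' b ≠ g' c := by
  classical
  have tup : ∀ (M : Type (max u v)) (x y : Fin 0 → M), x = y :=
    fun M x y => funext fun k => k.elim0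
  have relcast : ∀ (M : Type (max u v)) [L.Structure M] (R : L.Relations 0)
      (x y : Fin 0 → M), Structure.RelMap R x → Structure.RelMap R y := by
    intro M _ R x y h
    rwa [tup M y x]
  haveI hB : IsEmpty B :=
    ⟨fun b => hA.false ((hi (posTop 0) (fun k => k.elim0)).2 ⟨b, rfl⟩).choose⟩
  haveI hC : IsEmpty C :=
    ⟨fun c => hj (n := 1) (m := 0) (.equal (.var 0) (.var 0)) .falsum (fun k => k.elim0)
      (fun v _ => (hA.false (v 0)).elim) (fun _ => c) rfl⟩
  have hCA : ∀ (R : L.Relations 0) (x : Fin 0 → C), Structure.RelMap R x →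
      ∀ y : Fin 0 → A, Structure.RelMap R y := by
    intro R x hR y
    by_contra hy
    exact hj (n := 0) (m := 0) (.rel R (fun k => k.elim0)) .falsum (fun k => k.elim0)
      (fun v hv => hy (relcast A R _ y hv)) x (relcast C R x _ hR)
  have hAC : ∀ (R : L.Relations 0) (y : Fin 0 → A), Structure.RelMap R y →
      ∀ x : Fin 0 → C, Structure.RelMap R x := by
    intro R y hR x
    exact relcast C R _ x (j.map_rel' R y hR)
  have hAB : ∀ (R : L.Relations 0) (y : Fin 0 → A) (z : Fin 0 → B),
      Structure.RelMap R y ↔ Structure.RelMap R z := by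
    intro R y z
    have := hi (.rel R (fun k => k.elim0)) y
    simp only [PosForm.Realize] at this
    constructor
    · intro h
      exact relcast B R _ z (this.1 (relcast A R y _ h))
    · intro h
      exact relcast A R _ y (this.2 (relcast B R z _ h))
  have hrel : ∀ (R : L.Relations 0) (x : Fin 0 → C) (z : Fin 0 → B),
      Structure.RelMap R x ↔ Structure.RelMap R z := by
    intro R x z
    constructor
    · intro h
      exact (hAB R (fun k => k.elim0) z).1 (hCA R x h _)
    · intro h
      exact hAC R _ ((hAB R (fun k => k.elim0) z).2 h) x
  let g' : C →[L] B :=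
    { toFun := fun c => isEmptyElim c
      map_fun' := by
        intro l f x
        exact isEmptyElim (Structure.funMap f x)
      map_rel' := by
        intro l r x hx
        cases l with
        | zero => exact (hrel r x _).1 hx
        | succ l => exact isEmptyElim (x 0) }
  refine ⟨B, ‹L.Structure B›, Hom.id L B, g', ?_, ?_, ?_, ?_⟩
  · intro n m φ ψ a h v hv
    have hid : (⇑(Hom.id L B) ∘ a) = a := funext fun t => rfl
    rw [hid] at hv ⊢
    exact h v hv
  · intro n φ v
    exact realize_iff_of_isEmpty hrel φ v _
  · exact Hom.ext fun a => isEmptyElim a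
  · intro b c hb hc
    exact isEmptyElim c

/-- strong asymmetric amalgamation of an immersion against a
strong immersion. -/
theorem strong_asymmetric_amalgamation
    (A B C : Type (max u v)) [L.Structure A] [L.Structure B] [L.Structure C]
    (i : A →[L] B) (j : A →[L] C) (hi : IsImmersion i) (hj : IsStrongImmersion j) :
    ∃ (D : Type (max u v)) (_ : L.Structure D) (f' : B →[L] D) (g' : C →[L] D),
      IsStrongImmersion f' ∧ IsImmersion g' ∧ f'.comp i = g'.comp j ∧
        ∀ b c, b ∉ Set.range i → c ∉ Set.range j → f' b ≠ g' c := by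
  rcases isEmpty_or_nonempty A with hA | hA
  · exact empty_case A B C i j hi hj hA
  · obtain ⟨a₀⟩ := hA
    exact main_case A B C i j hi hj a₀
end PositiveLogic
end

section
/- Heredity of strong amalgamation bases under immersion: let T be an h-inductive theory, B a model of T which is an [h]-strong amalgamation basis of T, and A a model of T immersed in B. Then A is also an [h]-strong amalgamation basis of T. -/
open FirstOrder FirstOrder.Language

universe u v w w'

namespace PositiveLogic

variable {L : FirstOrder.Language.{u, v}}

/-- `M` is an `[h]`-strong amalgamation basis of `T`: any two homomorphic
continuations of `M` into models of `T` amalgamate into a model of `T`,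
identifying no points outside the images of `M`. -/
def HStrongBasis (T : Set (HInd L)) (M : Type (max u v)) [L.Structure M] : Prop :=
  ∀ (C : Type (max u v)) [L.Structure C] (D : Type (max u v)) [L.Structure D],
    HModels C T → HModels D T → ∀ (f : M →[L] C) (g : M →[L] D),
      ∃ (E : Type (max u v)) (_ : L.Structure E) (f' : C →[L] E) (g' : D →[L] E),
        HModels E T ∧ f'.comp f = g'.comp g ∧
          ∀ c d, f' c = g' d → c ∈ Set.range f ∧ d ∈ Set.range g

section Aux

variable {M : Type w} {N : Type w'} [L.Structure M] [L.Structure N]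

theorem PosForm.realize_hom (h : M →[L] N) :
    ∀ {n : ℕ} (φ : PosForm L n) (v : Fin n → M), φ.Realize v → φ.Realize (h ∘ v) := by
  intro n φ
  induction φ with
  | falsum => exact fun v hv => hv.elim
  | equal t u =>
    intro v hv
    show Term.realize _ _ = Term.realize _ _
    rw [HomClass.realize_term, HomClass.realize_term]
    exact congrArg h hv
  | rel R ts =>
    intro v hv
    show Structure.RelMap R _
    have : (fun i => Term.realize (h ∘ v) (ts i)) = h ∘ fun i => Term.realize v (ts i) := by
      funext j; rw [HomClass.realize_term]; rfl
    rw [this]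
    exact HomClass.map_rel h R _ hv
  | and φ ψ ihφ ihψ => exact fun v hv => ⟨ihφ v hv.1, ihψ v hv.2⟩
  | or φ ψ ihφ ihψ =>
    rintro v (hv | hv)
    · exact Or.inl (ihφ v hv)
    · exact Or.inr (ihψ v hv)
  | ex φ ih =>
    rintro v ⟨x, hx⟩
    refine ⟨h x, ?_⟩
    have := ih (Fin.snoc v x) hx
    rwa [Fin.comp_snoc] at this

/-- Translation of positive formulas into mathlib's first-order formulas. -/
def toBF : ∀ {n : ℕ}, PosForm L n → L.BoundedFormula Empty n
  | _, .falsum => ⊥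
  | _, .equal t u => (t.relabel Sum.inr).bdEqual (u.relabel Sum.inr)
  | _, .rel R ts => R.boundedFormula fun j => (ts j).relabel Sum.inr
  | _, .and φ ψ => toBF φ ⊓ toBF ψ
  | _, .or φ ψ => toBF φ ⊔ toBF ψ
  | _, .ex φ => (toBF φ).ex

theorem realize_toBF : ∀ {n : ℕ} (φ : PosForm L n) (e : Empty → M) (v : Fin n → M),
    (toBF φ).Realize e v ↔ φ.Realize v := by
  intro n φ
  induction φ with
  | falsum => intro e v; simp [toBF, PosForm.Realize]
  | equal t u =>
    intro e v
    simp [toBF, PosForm.Realize, Term.realize_relabel, Sum.elim_comp_inr]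
  | rel R ts =>
    intro e v
    simp [toBF, PosForm.Realize, Term.realize_relabel, Sum.elim_comp_inr]
  | and φ ψ ihφ ihψ =>
    intro e v
    simp [toBF, PosForm.Realize, ihφ, ihψ]
  | or φ ψ ihφ ihψ =>
    intro e v
    simp [toBF, PosForm.Realize, ihφ, ihψ]
  | ex φ ih =>
    intro e v
    simp only [toBF, BoundedFormula.realize_ex, ih]
    rfl

/-- The first-order sentence corresponding to a basic h-inductive sentence. -/
def hIndSent (s : HInd L) : L.Sentence :=
  ((toBF s.hyp).imp (toBF s.concl)).alls

theorem realize_hIndSent (s : HInd L) : (M ⊨ hIndSent s) ↔ s.Realize M := by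
  simp only [hIndSent, Sentence.Realize, BoundedFormula.realize_alls,
    BoundedFormula.realize_imp, realize_toBF, HInd.Realize]

end Aux
section Aux2

variable {M : Type w} [L.Structure M]

/-- Existentially quantify the last `n` variables. -/
def exs : ∀ {k n : ℕ}, PosForm L (k + n) → PosForm L k
  | _, 0, φ => φ
  | _, _ + 1, φ => exs φ.ex

theorem realize_exs : ∀ {k n : ℕ} (φ : PosForm L (k + n)) (v : Fin k → M),
    (exs φ).Realize v ↔ ∃ w : Fin n → M, φ.Realize (Fin.append v w) := by
  intro k n
  induction n with
  | zero =>
    intro φ v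
    constructor
    · intro h
      exact ⟨Fin.elim0, by rwa [Fin.append_elim0]⟩
    · rintro ⟨w, hw⟩
      rw [Subsingleton.elim w Fin.elim0, Fin.append_elim0] at hw
      exact hw
  | succ n ih =>
    intro φ v
    rw [show (exs φ : PosForm L k) = exs (φ.ex) from rfl, ih]
    constructor
    · rintro ⟨w, x, hx⟩
      exact ⟨Fin.snoc w x, by rwa [Fin.append_snoc]⟩
    · rintro ⟨w, hw⟩
      refine ⟨Fin.init w, w (Fin.last n), ?_⟩
      rw [← Fin.append_snoc, Fin.snoc_init_self]
      exact hw

/-- Conjunction of a list of positive formulas (with a harmless nonemptiness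
assertion as the empty conjunction). -/
def conjList : ∀ {m : ℕ}, List (PosForm L m) → PosForm L m
  | m, [] => .ex (.equal (Term.var (Fin.last m)) (Term.var (Fin.last m)))
  | _, φ :: l => .and φ (conjList l)

theorem realize_conjList : ∀ {m : ℕ} (l : List (PosForm L m)) (v : Fin m → M),
    (conjList l).Realize v ↔ (Nonempty M ∧ ∀ φ ∈ l, φ.Realize v) := by
  intro m l
  induction l with
  | nil =>
    intro v
    simp only [conjList]
    constructor
    · rintro ⟨x, _⟩
      exact ⟨⟨x⟩, by simp⟩
    · rintro ⟨⟨x⟩, _⟩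
      exact ⟨x, rfl⟩
  | cons φ l ih =>
    intro v
    simp only [conjList]
    constructor
    · rintro ⟨h1, h2⟩
      obtain ⟨hne, hall⟩ := (ih v).1 h2
      refine ⟨hne, ?_⟩
      intro ψ hψ
      rcases List.mem_cons.1 hψ with h | h
      · exact h ▸ h1
      · exact hall ψ h
    · rintro ⟨hne, hall⟩
      exact ⟨hall φ List.mem_cons_self, (ih v).2 ⟨hne, fun ψ hψ => hall ψ (List.mem_cons_of_mem _ hψ)⟩⟩

end Aux2
section Key

theorem exists_finite_cover {ι : Type*} {β : Type*} (g : ι → β) (s : Set β)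
    (hs : s.Finite) (h : s ⊆ Set.range g) : ∃ u : Set ι, u.Finite ∧ s ⊆ g '' u := by
  haveI := hs.to_subtype
  choose gg hgg using fun x : s => h x.2
  exact ⟨Set.range gg, Set.finite_range _, fun x hx =>
    ⟨gg ⟨x, hx⟩, ⟨⟨x, hx⟩, rfl⟩, hgg ⟨x, hx⟩⟩⟩

variable {A B C : Type (max u v)} [L.Structure A] [L.Structure B] [L.Structure C]

/-- The term naming an element of `B ⊕ C`. -/
def conTerm (x : B ⊕ C) : (L[[B ⊕ C]]).Term Empty := (L.con x).term

/-- Positive diagram sentence recording a function application in `B`. -/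
def funSentB {l : ℕ} (F : L.Functions l) (bs : Fin l → B) : (L[[B ⊕ C]]).Sentence :=
  Term.equal (Term.func (Sum.inl F) fun j => conTerm (Sum.inl (bs j)))
    (conTerm (Sum.inl (Structure.funMap F bs)))

/-- Positive diagram sentence recording a relation holding in `B`. -/
def relSentB {l : ℕ} (R : L.Relations l) (bs : Fin l → B) : (L[[B ⊕ C]]).Sentence :=
  Relations.formula (Sum.inl R) fun j => (conTerm (Sum.inl (bs j)) : (L[[B ⊕ C]]).Term Empty)

/-- Positive diagram sentence recording a function application in `C`. -/
def funSentC {l : ℕ} (F : L.Functions l) (cs : Fin l → C) : (L[[B ⊕ C]]).Sentence :=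
  Term.equal (Term.func (Sum.inl F) fun j => conTerm (Sum.inr (cs j)))
    (conTerm (Sum.inr (Structure.funMap F cs)))

/-- Positive diagram sentence recording a relation holding in `C`. -/
def relSentC {l : ℕ} (R : L.Relations l) (cs : Fin l → C) : (L[[B ⊕ C]]).Sentence :=
  Relations.formula (Sum.inl R) fun j => (conTerm (Sum.inr (cs j)) : (L[[B ⊕ C]]).Term Empty)

/-- Sentence identifying the two copies of an element of `A`. -/
def idSent (i : A →[L] B) (f : A →[L] C) (a : A) : (L[[B ⊕ C]]).Sentence :=
  Term.equal (conTerm (Sum.inl (i a))) (conTerm (Sum.inr (f a)))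

/-- Sentence separating an element of `B` from an element of `C`. -/
def neqSent (b : B) (c : C) : (L[[B ⊕ C]]).Sentence :=
  Formula.not (Term.equal (conTerm (Sum.inl b)) (conTerm (Sum.inr c)))

/-- The theory whose models amalgamate `B` and `C` over `A`, adding no
identifications between `B` and new elements of `C`. -/
def bigTheory (T : Set (HInd L)) (i : A →[L] B) (f : A →[L] C) : (L[[B ⊕ C]]).Theory :=
  (L.lhomWithConstants (B ⊕ C)).onTheory (hIndSent '' T)
    ∪ {σ | ∃ (l : ℕ) (F : L.Functions l) (bs : Fin l → B), σ = funSentB F bs}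
    ∪ {σ | ∃ (l : ℕ) (R : L.Relations l) (bs : Fin l → B),
        Structure.RelMap R bs ∧ σ = relSentB R bs}
    ∪ {σ | ∃ (l : ℕ) (F : L.Functions l) (cs : Fin l → C), σ = funSentC F cs}
    ∪ {σ | ∃ (l : ℕ) (R : L.Relations l) (cs : Fin l → C),
        Structure.RelMap R cs ∧ σ = relSentC R cs}
    ∪ {σ | ∃ a : A, σ = idSent i f a}
    ∪ {σ | ∃ (b : B) (c : C), c ∉ Set.range f ∧ σ = neqSent b c}

section RealizeSent

variable {MM : Type*} [(L[[B ⊕ C]]).Structure MM]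

/-- Interpretation of the new constants. -/
def emOf (MM : Type*) [(L[[B ⊕ C]]).Structure MM] (x : B ⊕ C) : MM :=
  Structure.funMap (L.con x : (L[[B ⊕ C]]).Constants) default

theorem realize_conTerm (x : B ⊕ C) (v : Empty → MM) :
    (conTerm x : (L[[B ⊕ C]]).Term Empty).realize v = emOf (L := L) MM x := by
  show (L.con x).term.realize v = _
  rw [Term.realize_constants]
  rfl

theorem realize_funSentB {l : ℕ} (F : L.Functions l) (bs : Fin l → B) :
    (MM ⊨ (funSentB (C := C) F bs : (L[[B ⊕ C]]).Sentence)) ↔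
      Structure.funMap (L := L[[B ⊕ C]]) (M := MM) (Sum.inl F)
          (fun j => emOf (L := L) (C := C) MM (Sum.inl (bs j))) = emOf (L := L) (C := C) MM (Sum.inl (Structure.funMap F bs)) := by
  refine Formula.realize_equal.trans ?_
  erw [Term.realize_func]
  simp only [realize_conTerm]

theorem realize_relSentB {l : ℕ} (R : L.Relations l) (bs : Fin l → B) :
    (MM ⊨ (relSentB (C := C) R bs : (L[[B ⊕ C]]).Sentence)) ↔
      Structure.RelMap (L := L[[B ⊕ C]]) (M := MM) (Sum.inl R)
        (fun j => emOf (L := L) (C := C) MM (Sum.inl (bs j))) := by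
  refine Formula.realize_rel.trans ?_
  simp only [realize_conTerm]

theorem realize_funSentC {l : ℕ} (F : L.Functions l) (cs : Fin l → C) :
    (MM ⊨ (funSentC (B := B) F cs : (L[[B ⊕ C]]).Sentence)) ↔
      Structure.funMap (L := L[[B ⊕ C]]) (M := MM) (Sum.inl F)
          (fun j => emOf (L := L) (B := B) MM (Sum.inr (cs j))) = emOf (L := L) (B := B) MM (Sum.inr (Structure.funMap F cs)) := by
  refine Formula.realize_equal.trans ?_
  erw [Term.realize_func]
  simp only [realize_conTerm]

theorem realize_relSentC {l : ℕ} (R : L.Relations l) (cs : Fin l → C) :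
    (MM ⊨ (relSentC (B := B) R cs : (L[[B ⊕ C]]).Sentence)) ↔
      Structure.RelMap (L := L[[B ⊕ C]]) (M := MM) (Sum.inl R)
        (fun j => emOf (L := L) (B := B) MM (Sum.inr (cs j))) := by
  refine Formula.realize_rel.trans ?_
  simp only [realize_conTerm]

theorem realize_idSent (i : A →[L] B) (f : A →[L] C) (a : A) :
    (MM ⊨ (idSent i f a : (L[[B ⊕ C]]).Sentence)) ↔
      emOf (L := L) (C := C) MM (Sum.inl (i a)) = emOf (L := L) (B := B) MM (Sum.inr (f a)) := by
  simp [idSent, conTerm, Sentence.Realize, Formula.realize_equal, emOf, constantMap, Term.realize_constants]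

theorem realize_neqSent (b : B) (c : C) :
    (MM ⊨ (neqSent b c : (L[[B ⊕ C]]).Sentence)) ↔
      ¬(emOf (L := L) (C := C) MM (Sum.inl b) = emOf (L := L) (B := B) MM (Sum.inr c)) := by
  simp [neqSent, conTerm, Sentence.Realize, Formula.realize_not, Formula.realize_equal, emOf, constantMap, Term.realize_constants]

end RealizeSent

end Key
section Sat

variable {A B C : Type (max u v)} [L.Structure A] [L.Structure B] [L.Structure C]

theorem bigTheory_isSat (T : Set (HInd L)) (hC : HModels C T) (i : A →[L] B) (f : A →[L] C)
    (hi : IsImmersion i) (hBne : Nonempty B) : (bigTheory T i f).IsSatisfiable := by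
  classical
  have hAne : Nonempty A := by
    have h1 : (PosForm.ex (.equal (Term.var 0) (Term.var 0)) : PosForm L 0).Realize
        (i ∘ (Fin.elim0 : Fin 0 → A)) := ⟨hBne.some, rfl⟩
    obtain ⟨a, -⟩ := (hi (PosForm.ex (.equal (Term.var 0) (Term.var 0))) Fin.elim0).2 h1
    exact ⟨a⟩
  have hCne : Nonempty C := ⟨f hAne.some⟩
  rw [Theory.isSatisfiable_iff_isFinitelySatisfiable]
  intro T0 hT0
  have hfin := T0.finite_toSet
  obtain ⟨uF, huFfin, huF⟩ := exists_finite_cover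
    (fun p : (Σ l : ℕ, L.Functions l × (Fin l → B)) =>
      (funSentB (C := C) p.2.1 p.2.2 : (L[[B ⊕ C]]).Sentence))
    ((↑T0 : Set _) ∩ {σ | ∃ (l : ℕ) (F : L.Functions l) (bs : Fin l → B), σ = funSentB F bs})
    (hfin.inter_of_left _)
    (by rintro σ ⟨-, l, F, bs, rfl⟩; exact ⟨⟨l, F, bs⟩, rfl⟩)
  obtain ⟨uR, huRfin, huR⟩ := exists_finite_cover
    (fun p : {p : (Σ l : ℕ, L.Relations l × (Fin l → B)) // Structure.RelMap p.2.1 p.2.2} =>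
      (relSentB (C := C) p.1.2.1 p.1.2.2 : (L[[B ⊕ C]]).Sentence))
    ((↑T0 : Set _) ∩ {σ | ∃ (l : ℕ) (R : L.Relations l) (bs : Fin l → B),
        Structure.RelMap R bs ∧ σ = relSentB R bs})
    (hfin.inter_of_left _)
    (by rintro σ ⟨-, l, R, bs, hR, rfl⟩; exact ⟨⟨⟨l, R, bs⟩, hR⟩, rfl⟩)
  obtain ⟨uI, huIfin, huI⟩ := exists_finite_cover
    (fun a : A => (idSent i f a : (L[[B ⊕ C]]).Sentence))
    ((↑T0 : Set _) ∩ {σ | ∃ a : A, σ = idSent i f a})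
    (hfin.inter_of_left _)
    (by rintro σ ⟨-, a, rfl⟩; exact ⟨a, rfl⟩)
  set S : Set B := ((⋃ p ∈ uF, (Set.range p.2.2 ∪ {Structure.funMap p.2.1 p.2.2})) ∪
      ⋃ p ∈ uR, Set.range p.1.2.2) ∪ (i '' uI) with hSdef
  have hSfin : S.Finite :=
    (((huFfin.biUnion fun p _ => (Set.finite_range _).union (Set.finite_singleton _)).union
      (huRfin.biUnion fun p _ => Set.finite_range _))).union (huIfin.image i)
  have hmemF1 : ∀ p ∈ uF, ∀ j : Fin p.1, p.2.2 j ∈ S := fun p hp j =>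
    Set.mem_union_left _ (Set.mem_union_left _ (Set.mem_biUnion hp (Set.mem_union_left _ ⟨j, rfl⟩)))
  have hmemF2 : ∀ p ∈ uF, Structure.funMap p.2.1 p.2.2 ∈ S := fun p hp =>
    Set.mem_union_left _ (Set.mem_union_left _ (Set.mem_biUnion hp (Set.mem_union_right _ rfl)))
  have hmemR : ∀ p ∈ uR, ∀ j : Fin p.1.1, p.1.2.2 j ∈ S := fun p hp j =>
    Set.mem_union_left _ (Set.mem_union_right _ (Set.mem_biUnion hp ⟨j, rfl⟩))
  have hmemI : ∀ a ∈ uI, i a ∈ S := fun a ha => Set.mem_union_right _ ⟨a, ha, rfl⟩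
  letI := hSfin.fintype
  letI := huIfin.fintype
  set nn := Fintype.card S with hnn
  set kk := Fintype.card uI with hkk
  set eS := (Fintype.equivFin S) with heS
  set eP := (Fintype.equivFin uI) with heP
  set mV := (kk+1)+(nn+1) with hmV
  set ι₂ : B → Fin (nn+1) := fun b => if hb : b ∈ S then (eS ⟨b, hb⟩).castSucc else Fin.last nn
    with hι₂
  set ιP : A → Fin (kk+1) := fun a => if ha : a ∈ uI then (eP ⟨a, ha⟩).castSucc else Fin.last kk
    with hιP
  set posB : B → Fin mV := fun b => Fin.natAdd (kk+1) (ι₂ b) with hposB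
  set posA : A → Fin mV := fun a => Fin.castAdd (nn+1) (ιP a) with hposA
  set vA : Fin (kk+1) → A :=
    fun j => if h : (j : ℕ) < kk then ((eP.symm ⟨j, h⟩ : uI) : A) else hAne.some with hvAdef
  set σB : Fin (nn+1) → B :=
    fun j => if h : (j : ℕ) < nn then ((eS.symm ⟨j, h⟩ : S) : B) else hBne.some with hσBdef
  have hvA : ∀ a (ha : a ∈ uI), vA (ιP a) = a := by
    intro a ha
    have hlt : (((eP ⟨a, ha⟩).castSucc : Fin (kk+1)) : ℕ) < kk := by
      rw [Fin.coe_castSucc]; exact (eP ⟨a, ha⟩).isLt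
    simp only [hvAdef, hιP, dif_pos ha]
    rw [dif_pos hlt]
    have : (⟨(((eP ⟨a, ha⟩).castSucc : Fin (kk+1)) : ℕ), hlt⟩ : Fin kk) = eP ⟨a, ha⟩ := by
      ext; simp
    rw [this, Equiv.symm_apply_apply]
  have hσB : ∀ b (hb : b ∈ S), σB (ι₂ b) = b := by
    intro b hb
    have hlt : (((eS ⟨b, hb⟩).castSucc : Fin (nn+1)) : ℕ) < nn := by
      rw [Fin.coe_castSucc]; exact (eS ⟨b, hb⟩).isLt
    simp only [hσBdef, hι₂, dif_pos hb]
    rw [dif_pos hlt]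
    have : (⟨(((eS ⟨b, hb⟩).castSucc : Fin (nn+1)) : ℕ), hlt⟩ : Fin nn) = eS ⟨b, hb⟩ := by
      ext; simp
    rw [this, Equiv.symm_apply_apply]
  have hwBB : ∀ b (_ : b ∈ S), Fin.append (i ∘ vA) σB (posB b) = b := by
    intro b hb
    simp only [hposB]
    rw [Fin.append_right]
    exact hσB b hb
  have hwBA : ∀ a (_ : a ∈ uI), Fin.append (i ∘ vA) σB (posA a) = i a := by
    intro a ha
    simp only [hposA]
    rw [Fin.append_left]
    show i (vA (ιP a)) = i a
    rw [hvA a ha]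
  set LF : List (PosForm L mV) := huFfin.toFinset.toList.map (fun p =>
    .equal (Term.func p.2.1 fun j => Term.var (posB (p.2.2 j)))
      (Term.var (posB (Structure.funMap p.2.1 p.2.2)))) with hLF
  set LR : List (PosForm L mV) := huRfin.toFinset.toList.map (fun p =>
    .rel p.1.2.1 fun j => Term.var (posB (p.1.2.2 j))) with hLR
  set LI : List (PosForm L mV) := huIfin.toFinset.toList.map (fun a =>
    .equal (Term.var (posB (i a))) (Term.var (posA a))) with hLI
  set χ : PosForm L mV := conjList (LF ++ LR ++ LI) with hχ
  have hχB : χ.Realize (Fin.append (i ∘ vA) σB) := by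
    refine (realize_conjList _ _).2 ⟨hBne, ?_⟩
    intro φ hφ
    rcases List.mem_append.1 hφ with hφ' | hφ'
    · rcases List.mem_append.1 hφ' with hφ'' | hφ''
      · obtain ⟨p, hp, rfl⟩ := List.mem_map.1 hφ''
        have hp' : p ∈ uF := huFfin.mem_toFinset.1 (Finset.mem_toList.1 hp)
        show Structure.funMap p.2.1
            (fun j => Fin.append (i ∘ vA) σB (posB (p.2.2 j))) =
          Fin.append (i ∘ vA) σB (posB (Structure.funMap p.2.1 p.2.2))
        rw [hwBB _ (hmemF2 p hp')]
        congr 1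
        funext j
        exact hwBB _ (hmemF1 p hp' j)
      · obtain ⟨p, hp, rfl⟩ := List.mem_map.1 hφ''
        have hp' : p ∈ uR := huRfin.mem_toFinset.1 (Finset.mem_toList.1 hp)
        show Structure.RelMap p.1.2.1 (fun j => Fin.append (i ∘ vA) σB (posB (p.1.2.2 j)))
        have : (fun j => Fin.append (i ∘ vA) σB (posB (p.1.2.2 j))) = p.1.2.2 := by
          funext j; exact hwBB _ (hmemR p hp' j)
        rw [this]
        exact p.2
    · obtain ⟨a, ha, rfl⟩ := List.mem_map.1 hφ'
      have ha' : a ∈ uI := huIfin.mem_toFinset.1 (Finset.mem_toList.1 ha)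
      show Fin.append (i ∘ vA) σB (posB (i a)) = Fin.append (i ∘ vA) σB (posA a)
      rw [hwBB _ (hmemI a ha'), hwBA a ha']
  have hbigB : (exs χ).Realize (i ∘ vA) := (realize_exs χ (i ∘ vA)).2 ⟨σB, hχB⟩
  have hbigA : (exs χ).Realize vA := (hi (exs χ) vA).2 hbigB
  obtain ⟨τ, hχA⟩ := (realize_exs χ vA).1 hbigA
  have hχC : χ.Realize (f ∘ Fin.append vA τ) := PosForm.realize_hom f χ _ hχA
  have hallA := ((realize_conjList _ _).1 hχA).2
  have hallC := ((realize_conjList _ _).1 hχC).2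
  have happB : ∀ b : B, Fin.append vA τ (posB b) = τ (ι₂ b) := by
    intro b
    simp only [hposB]
    exact Fin.append_right _ _ _
  have happA : ∀ a (_ : a ∈ uI), Fin.append vA τ (posA a) = a := by
    intro a ha
    simp only [hposA]
    rw [Fin.append_left]
    exact hvA a ha
  set θ : B → C := fun b => f (τ (ι₂ b)) with hθ
  set em : B ⊕ C → C := Sum.elim θ (fun c => c) with hem
  letI : (constantsOn (B ⊕ C)).Structure C := constantsOn.structure em
  have hemOf : ∀ x : B ⊕ C, emOf (L := L) C x = em x := fun x => rfl
  haveI hmodel : C ⊨ (↑T0 : (L[[B ⊕ C]]).Theory) := by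
    refine ⟨fun σ hσ0 => ?_⟩
    rcases hT0 hσ0 with ((((((h | h) | h) | h) | h) | h) | h)
    · obtain ⟨ψ, hψ, rfl⟩ := h
      obtain ⟨s, hs, rfl⟩ := hψ
      rw [LHom.realize_onSentence, realize_hIndSent]
      exact hC s hs
    · obtain ⟨p, hp, rfl⟩ := huF ⟨hσ0, h⟩
      rw [realize_funSentB]
      have hatom := hallC _ (List.mem_append_left _ (List.mem_append_left _
        (List.mem_map.2 ⟨p, Finset.mem_toList.2 (huFfin.mem_toFinset.2 hp), rfl⟩)))
      have h1 : Structure.funMap p.2.1 (fun j => θ (p.2.2 j)) =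
          θ (Structure.funMap p.2.1 p.2.2) := by
        have h2 : Structure.funMap p.2.1
            (fun j => f (Fin.append vA τ (posB (p.2.2 j)))) =
            f (Fin.append vA τ (posB (Structure.funMap p.2.1 p.2.2))) := hatom
        simp only [happB] at h2
        exact h2
      simp only [hemOf, hem, Sum.elim_inl]
      erw [funMap_sumInl]
      exact h1
    · obtain ⟨p, hp, rfl⟩ := huR ⟨hσ0, h⟩
      rw [realize_relSentB]
      have hatom := hallC _ (List.mem_append_left _ (List.mem_append_right _
        (List.mem_map.2 ⟨p, Finset.mem_toList.2 (huRfin.mem_toFinset.2 hp), rfl⟩)))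
      have h1 : Structure.RelMap p.1.2.1 (fun j => θ (p.1.2.2 j)) := by
        have h2 : Structure.RelMap p.1.2.1
            (fun j => f (Fin.append vA τ (posB (p.1.2.2 j)))) := hatom
        simp only [happB] at h2
        exact h2
      simp only [hemOf, hem, Sum.elim_inl]
      erw [relMap_sumInl]
      exact h1
    · obtain ⟨l, F, cs, rfl⟩ := h
      rw [realize_funSentC]
      simp only [hemOf, hem, Sum.elim_inr]
      erw [funMap_sumInl]
    · obtain ⟨l, R, cs, hR, rfl⟩ := h
      rw [realize_relSentC]
      simp only [hemOf, hem, Sum.elim_inr]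
      erw [relMap_sumInl]
      exact hR
    · obtain ⟨a, ha, rfl⟩ := huI ⟨hσ0, h⟩
      rw [realize_idSent]
      have hatom := hallA _ (List.mem_append_right _
        (List.mem_map.2 ⟨a, Finset.mem_toList.2 (huIfin.mem_toFinset.2 ha), rfl⟩))
      have h2 : Fin.append vA τ (posB (i a)) = Fin.append vA τ (posA a) := hatom
      rw [happB, happA a ha] at h2
      simp only [hemOf, hem, Sum.elim_inl, Sum.elim_inr, hθ]
      rw [h2]
    · obtain ⟨b, c, hcr, rfl⟩ := h
      rw [realize_neqSent]
      simp only [hemOf, hem, Sum.elim_inl, Sum.elim_inr, hθ]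
      intro heq
      exact hcr ⟨τ (ι₂ b), heq⟩
  exact Theory.Model.isSatisfiable C

end Sat
section KeyLemma

theorem key_amalgam (T : Set (HInd L))
    {A B C : Type (max u v)} [L.Structure A] [L.Structure B] [L.Structure C]
    (hC : HModels C T) (i : A →[L] B) (f : A →[L] C) (hi : IsImmersion i) :
    ∃ (E : Type (max u v)) (_ : L.Structure E) (β : B →[L] E) (γ : C →[L] E),
      HModels E T ∧ β.comp i = γ.comp f ∧ ∀ b c, β b = γ c → c ∈ Set.range f := by
  classical
  by_cases hBne : Nonempty B
  · -- main case: compactness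
    obtain ⟨M0⟩ := bigTheory_isSat T hC i f hi hBne
    letI : L.Structure M0 := (L.lhomWithConstants (B ⊕ C)).reduct M0
    haveI : (L.lhomWithConstants (B ⊕ C)).IsExpansionOn M0 :=
      LHom.isExpansionOn_reduct _ _
    have hfun : ∀ {l : ℕ} (F : L.Functions l) (x : Fin l → M0),
        Structure.funMap (L := L) F x =
          Structure.funMap (L := L[[B ⊕ C]]) (Sum.inl F) x := fun F x => rfl
    have hrel : ∀ {l : ℕ} (R : L.Relations l) (x : Fin l → M0),
        Structure.RelMap (L := L) R x ↔
          Structure.RelMap (L := L[[B ⊕ C]]) (Sum.inl R) x := fun R x => Iff.rfl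
    set e : B ⊕ C → M0 := fun x => emOf (L := L) M0 x with he
    have hrealize : ∀ σ ∈ bigTheory T i f, M0 ⊨ σ := fun σ hσ =>
      M0.is_model.realize_of_mem σ hσ
    refine ⟨M0, inferInstance, ⟨fun b => e (Sum.inl b), ?_, ?_⟩,
      ⟨fun c => e (Sum.inr c), ?_, ?_⟩, ?_, ?_, ?_⟩
    · -- β map_fun'
      intro l F x
      have h1 := hrealize (funSentB F x) (by
        refine Set.mem_union_left _ ?_
        refine Set.mem_union_left _ ?_
        refine Set.mem_union_left _ ?_
        refine Set.mem_union_left _ ?_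
        refine Set.mem_union_left _ ?_
        exact Set.mem_union_right _ ⟨l, F, x, rfl⟩)
      rw [realize_funSentB] at h1
      rw [hfun]
      exact h1.symm
    · -- β map_rel'
      intro l R x hR
      have h1 := hrealize (relSentB R x) (by
        refine Set.mem_union_left _ ?_
        refine Set.mem_union_left _ ?_
        refine Set.mem_union_left _ ?_
        refine Set.mem_union_left _ ?_
        exact Set.mem_union_right _ ⟨l, R, x, hR, rfl⟩)
      rw [realize_relSentB] at h1
      rw [hrel]
      exact h1
    · -- γ map_fun'
      intro l F x
      have h1 := hrealize (funSentC F x) (by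
        refine Set.mem_union_left _ ?_
        refine Set.mem_union_left _ ?_
        refine Set.mem_union_left _ ?_
        exact Set.mem_union_right _ ⟨l, F, x, rfl⟩)
      rw [realize_funSentC] at h1
      rw [hfun]
      exact h1.symm
    · -- γ map_rel'
      intro l R x hR
      have h1 := hrealize (relSentC R x) (by
        refine Set.mem_union_left _ ?_
        refine Set.mem_union_left _ ?_
        exact Set.mem_union_right _ ⟨l, R, x, hR, rfl⟩)
      rw [realize_relSentC] at h1
      rw [hrel]
      exact h1
    · -- HModels
      intro s hs
      have h1 := hrealize ((L.lhomWithConstants (B ⊕ C)).onSentence (hIndSent s)) (by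
        refine Set.mem_union_left _ ?_
        refine Set.mem_union_left _ ?_
        refine Set.mem_union_left _ ?_
        refine Set.mem_union_left _ ?_
        refine Set.mem_union_left _ ?_
        refine Set.mem_union_left _ ?_
        exact ⟨hIndSent s, ⟨s, hs, rfl⟩, rfl⟩)
      rw [LHom.realize_onSentence, realize_hIndSent] at h1
      exact h1
    · -- commutation
      apply Hom.ext
      intro a
      have h1 := hrealize (idSent i f a) (by
        refine Set.mem_union_left _ ?_
        exact Set.mem_union_right _ ⟨a, rfl⟩)
      rw [realize_idSent] at h1
      exact h1
    · -- strongness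
      intro b c hbc
      by_contra hc
      have h1 := hrealize (neqSent b c) (Set.mem_union_right _ ⟨b, c, hc, rfl⟩)
      rw [realize_neqSent] at h1
      exact h1 hbc
  · -- B empty
    haveI : IsEmpty B := not_nonempty_iff.mp hBne
    haveI : IsEmpty A := ⟨fun a => IsEmpty.elim ‹IsEmpty B› (i a)⟩
    refine ⟨C, inferInstance, ⟨fun b => isEmptyElim b, ?_, ?_⟩, Hom.id L C, hC, ?_, ?_⟩
    · intro l F x
      exact isEmptyElim (Structure.funMap F x)
    · intro l r x hx
      match l, r, x with
      | 0, r, x =>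
        have heqB : ∀ g h : Fin 0 → B, g = h := fun g h => funext fun j => j.elim0
        have heqC : ∀ g h : Fin 0 → C, g = h := fun g h => funext fun j => j.elim0
        have hBr : (PosForm.rel r (Fin.elim0 : Fin 0 → L.Term (Fin 0)) : PosForm L 0).Realize
            (i ∘ (Fin.elim0 : Fin 0 → A)) := by
          show Structure.RelMap r (fun j => Term.realize (i ∘ (Fin.elim0 : Fin 0 → A))
            ((Fin.elim0 : Fin 0 → L.Term (Fin 0)) j))
          rw [heqB x (fun j => Term.realize (i ∘ (Fin.elim0 : Fin 0 → A))
            ((Fin.elim0 : Fin 0 → L.Term (Fin 0)) j))] at hx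
          exact hx
        have hAr := (hi _ Fin.elim0).2 hBr
        have hCr := PosForm.realize_hom f _ Fin.elim0 hAr
        show Structure.RelMap r ((fun b : B => (isEmptyElim b : C)) ∘ x)
        rw [heqC ((fun b : B => (isEmptyElim b : C)) ∘ x)
          (fun j => Term.realize (f ∘ (Fin.elim0 : Fin 0 → A))
            ((Fin.elim0 : Fin 0 → L.Term (Fin 0)) j))]
        exact hCr
      | l + 1, r, x => exact isEmptyElim (x 0)
    · apply Hom.ext
      intro a
      exact isEmptyElim a
    · intro b c h
      exact isEmptyElim b

end KeyLemma
/-- heredity of `[h]`-strong amalgamation bases under immersion. -/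
theorem hStrongBasis_of_immersed (T : Set (HInd L))
    (B : Type (max u v)) [L.Structure B] (hB : HModels B T) (hBbasis : HStrongBasis T B)
    (A : Type (max u v)) [L.Structure A] (hA : HModels A T)
    (i : A →[L] B) (hi : IsImmersion i) : HStrongBasis T A := by
  intro C _ D _ hC hD f g
  obtain ⟨C₁, sC₁, β₁, γ₁, hC₁, comm₁, str₁⟩ := key_amalgam T hC i f hi
  obtain ⟨D₁, sD₁, β₂, δ, hD₁, comm₂, str₂⟩ := key_amalgam T hD i g hi
  obtain ⟨E, sE, p, q, hE, comm, str⟩ := hBbasis C₁ D₁ hC₁ hD₁ β₁ β₂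
  refine ⟨E, sE, p.comp γ₁, q.comp δ, hE, ?_, ?_⟩
  · apply Hom.ext
    intro a
    have h1 : γ₁ (f a) = β₁ (i a) := (DFunLike.congr_fun comm₁ a).symm
    have h2 : δ (g a) = β₂ (i a) := (DFunLike.congr_fun comm₂ a).symm
    have h3 : p (β₁ (i a)) = q (β₂ (i a)) := DFunLike.congr_fun comm (i a)
    show p (γ₁ (f a)) = q (δ (g a))
    rw [h1, h2, h3]
  · intro c d h
    have h' : p (γ₁ c) = q (δ d) := h
    obtain ⟨⟨b, hb⟩, ⟨b', hb'⟩⟩ := str (γ₁ c) (δ d) h'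
    exact ⟨str₁ b c hb, str₂ b' d hb'⟩
end PositiveLogic
end
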